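/- arXiv:1006.1428 — 3 statements merged into one kernel-verified Lean document; each statement's English description precedes it below -/
import Mathlib

section
/- Let A and B be finite sets, C a set, and T = (Q, δ) a Turing automaton of sort (A ⊕ A) ⊕ (B ⊕ B) ⊕ C. Let ρ be the bijection from (A ⊕ A) ⊕ (B ⊕ B) ⊕ C to (B ⊕ B) ⊕ (A ⊕ A) ⊕ C that interchanges the A ⊕ A block with the B ⊕ B block and fixes C. Then κ_B(κ_A T) = κ_A(κ_B(T · ρ)) as Turing automata of sort C: both have state set Q and their transition relations coincide. (Trace swapping, axiom I9, for Turing automata.) -/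
/-- The transition relation of a Turing automaton of sort `X`: a relation
`δ ⊆ (Q × X_*)²`, where `X_* = X ⊕ {*}` is modeled as `Option X`, with `none` the anchor. -/
def TRel (Q X : Type*) : Type _ := (Q × Option X) → (Q × Option X) → Prop

/-- Relational composition (product of the semiring of binary relations on `Q`). -/
def rcomp {Q : Type*} (r s : Q → Q → Prop) : Q → Q → Prop := fun a c => ∃ b, r a b ∧ s b c

/-- Union of relations (sum of the semiring of binary relations on `Q`). -/
def runion {Q : Type*} (r s : Q → Q → Prop) : Q → Q → Prop := fun a b => r a b ∨ s a b

/-- 2×2 matrices of binary relations on `Q`. -/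
def Mat2 (Q : Type*) : Type _ := Fin 2 → Fin 2 → (Q → Q → Prop)

/-- The transposition of indices used to interchange the two rows of a matrix. -/
def swap2 : Fin 2 → Fin 2 := fun i => if i = 0 then 1 else 0

/-- Alternating matrix product `M ⊙ N := M · (σN)`, where `σN` interchanges the rows of `N`. -/
def altMul {Q : Type*} (M N : Mat2 Q) : Mat2 Q :=
  fun i j => runion (rcomp (M i 0) (N (swap2 0) j)) (rcomp (M i 1) (N (swap2 1) j))

/-- `U⁰ := σI₂`: identity relations off the diagonal, empty relations on the diagonal. -/
def altOne {Q : Type*} : Mat2 Q := fun i j => if i = j then (fun _ _ => False) else Eq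

/-- Alternating matrix powers: `U⁰ = σI₂`, `U^(n+1) = Uⁿ ⊙ U`. -/
def altPow {Q : Type*} (U : Mat2 Q) : ℕ → Mat2 Q
  | 0 => altOne
  | n + 1 => altMul (altPow U n) U

/-- Alternating product of a row vector with a matrix: `u ⊙ M := u · (σM)`. -/
def altRowMul {Q : Type*} (u : Fin 2 → Q → Q → Prop) (M : Mat2 Q) : Fin 2 → Q → Q → Prop :=
  fun j => runion (rcomp (u 0) (M (swap2 0) j)) (rcomp (u 1) (M (swap2 1) j))

/-- Alternating product of a row vector with a column vector: `u ⊙ v := u · (σv)`. -/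
def altRowCol {Q : Type*} (u v : Fin 2 → Q → Q → Prop) : Q → Q → Prop :=
  runion (rcomp (u 0) (v (swap2 0))) (rcomp (u 1) (v (swap2 1)))

/-- A family `λ_{x,y}` of binary relations on `Q` indexed by pairs of interfaces. -/
def LamFamily (Q X : Type*) : Type _ := Option X → Option X → (Q → Q → Prop)

/-- The base case of the Kleene elimination: `λ^∅_{x,y} = {(q,r) | ((q,x),(r,y)) ∈ δ}`. -/
def lamInit {Q A B : Type*} (δ : TRel Q (A ⊕ A ⊕ B)) : LamFamily Q (A ⊕ A ⊕ B) :=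
  fun x y q r => δ (q, x) (r, y)

/-- One Kleene elimination step at `z ∈ A`:
`λ^(C∪{z})_{x,y} := λ^C_{x,y} ∪ ⋃_{n≥0} u ⊙ Uⁿ ⊙ v` with
`u = (λ^C_{x,⟨z,1⟩}, λ^C_{x,⟨z,2⟩})`, `v = (λ^C_{⟨z,1⟩,y}; λ^C_{⟨z,2⟩,y})` and
`U = (λ^C_{⟨z,i⟩,⟨z,j⟩})_{i,j}`. -/
def elimStep {Q A B : Type*} (lam : LamFamily Q (A ⊕ A ⊕ B)) (z : A) :
    LamFamily Q (A ⊕ A ⊕ B) :=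
  fun x y =>
    let p : Fin 2 → Option (A ⊕ A ⊕ B) := ![some (Sum.inl z), some (Sum.inr (Sum.inl z))]
    let u : Fin 2 → Q → Q → Prop := fun i => lam x (p i)
    let U : Mat2 Q := fun i j => lam (p i) (p j)
    let v : Fin 2 → Q → Q → Prop := fun i => lam (p i) y
    runion (lam x y) (fun q r => ∃ n, altRowCol (altRowMul u (altPow U n)) v q r)

/-- Kleene elimination along a list of elements of `A`. -/
def lamList {Q A B : Type*} (δ : TRel Q (A ⊕ A ⊕ B)) : List A → LamFamily Q (A ⊕ A ⊕ B)
  | [] => lamInit δ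
  | z :: L => elimStep (lamList δ L) z

/-- The trace `κ_A T` of a Turing automaton of sort `A ⊕ A ⊕ B` (`A` finite): its
transitions are `((q,b),(r,b'))` iff `(q,r) ∈ λ^A_{b,b'}`. -/
def kappa {Q A B : Type*} [Fintype A] (δ : TRel Q (A ⊕ A ⊕ B)) : TRel Q B :=
  fun a b =>
    lamList δ Finset.univ.toList (a.2.map (fun x => Sum.inr (Sum.inr x)))
      (b.2.map (fun x => Sum.inr (Sum.inr x))) a.1 b.1

/-- The relabeling `T · ρ` of a Turing automaton along a bijection `ρ : X ≃ Y`: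
`((q, ρ_* x),(r, ρ_* y))` is a transition iff `((q,x),(r,y))` is, where `ρ_*(*) = *`. -/
def relabel {Q X Y : Type*} (ρ : X ≃ Y) (δ : TRel Q X) : TRel Q Y :=
  fun a b => δ (a.1, a.2.map ρ.symm) (b.1, b.2.map ρ.symm)

/-- The sum `T ⊕ T'` of Turing automata of sorts `X` and `Y`: states `Q × Q'`, and a
transition happens in one component while the other state stays put; anchors identified. -/
def autSum {Q Q' X Y : Type*} (δ : TRel Q X) (δ' : TRel Q' Y) : TRel (Q × Q') (X ⊕ Y) :=
  fun a b =>
    (∃ u v : Option X, a.2 = u.map Sum.inl ∧ b.2 = v.map Sum.inl ∧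
      a.1.2 = b.1.2 ∧ δ (a.1.1, u) (b.1.1, v)) ∨
    (∃ u v : Option Y, a.2 = u.map Sum.inr ∧ b.2 = v.map Sum.inr ∧
      a.1.1 = b.1.1 ∧ δ' (a.1.2, u) (b.1.2, v))

/-- The identity Turing automaton `1_A` of sort `A ⊕ A`: a single state, with transitions
from `⟨a,1⟩` to `⟨a,2⟩` and back for every `a ∈ A`. -/
def idAut (A : Type*) : TRel PUnit (A ⊕ A) :=
  fun a b =>
    (∃ x : A, a.2 = some (Sum.inl x) ∧ b.2 = some (Sum.inr x)) ∨
    (∃ x : A, a.2 = some (Sum.inr x) ∧ b.2 = some (Sum.inl x))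

/-- The permutation `c_{A,B⊕B} ⊗ 1_C` rearranging `(A ⊕ B) ⊕ (B ⊕ C)` into
`B ⊕ B ⊕ (A ⊕ C)`, used to define the derived composition. -/
def compPerm (A B C : Type*) : (A ⊕ B) ⊕ (B ⊕ C) ≃ B ⊕ B ⊕ (A ⊕ C) where
  toFun x := match x with
    | .inl (.inl a) => .inr (.inr (.inl a))
    | .inl (.inr b) => .inl b
    | .inr (.inl b) => .inr (.inl b)
    | .inr (.inr c) => .inr (.inr (.inr c))
  invFun y := match y with
    | .inl b => .inl (.inr b)
    | .inr (.inl b) => .inr (.inl b)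
    | .inr (.inr (.inl a)) => .inl (.inl a)
    | .inr (.inr (.inr c)) => .inr (.inr c)
  left_inv x := by rcases x with (a | b) | (b | c) <;> rfl
  right_inv y := by rcases y with b | (b | (a | c)) <;> rfl

/-- The derived composition `T ∘ T' := κ_B((T ⊕ T') · (c_{A,B⊕B} ⊗ 1_C))` of Turing
automata of sorts `A ⊕ B` and `B ⊕ C` (`B` finite). -/
def compAut {Q Q' A B C : Type*} [Fintype B]
    (δ : TRel Q (A ⊕ B)) (δ' : TRel Q' (B ⊕ C)) : TRel (Q × Q') (A ⊕ C) :=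
  kappa (relabel (compPerm A B C) (autSum δ δ'))

/-- The block-swap permutation `A ⊕ A ⊕ B ⊕ B ⊕ C ≃ B ⊕ B ⊕ A ⊕ A ⊕ C` interchanging
the `A ⊕ A` block with the `B ⊕ B` block and fixing `C`. -/
def blockSwap (A B C : Type*) : A ⊕ A ⊕ B ⊕ B ⊕ C ≃ B ⊕ B ⊕ A ⊕ A ⊕ C where
  toFun x := match x with
    | .inl a => .inr (.inr (.inl a))
    | .inr (.inl a) => .inr (.inr (.inr (.inl a)))
    | .inr (.inr (.inl b)) => .inl b
    | .inr (.inr (.inr (.inl b))) => .inr (.inl b)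
    | .inr (.inr (.inr (.inr c))) => .inr (.inr (.inr (.inr c)))
  invFun y := match y with
    | .inl b => .inr (.inr (.inl b))
    | .inr (.inl b) => .inr (.inr (.inr (.inl b)))
    | .inr (.inr (.inl a)) => .inl a
    | .inr (.inr (.inr (.inl a))) => .inr (.inl a)
    | .inr (.inr (.inr (.inr c))) => .inr (.inr (.inr (.inr c)))
  left_inv x := by rcases x with a | (a | (b | (b | c))) <;> rfl
  right_inv y := by rcases y with b | (b | (a | (a | c))) <;> rfl


/-! ### Auxiliary development: path characterization of Kleene elimination -/

section Aux

variable {Q X Y : Type*}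

/-- Symmetric "port" relation: entering at `w1` re-emerges at `w2` and vice versa. -/
def ports2 {X : Type*} (w1 w2 : X) : Option X → Option X → Prop :=
  fun w w' => (w = some w1 ∧ w' = some w2) ∨ (w = some w2 ∧ w' = some w1)

/-- Paths through `lam` whose intermediate interface jumps are allowed by `S`. -/
inductive GPath (lam : LamFamily Q X) (S : Option X → Option X → Prop) :
    Option X → Option X → Q → Q → Prop
  | base {x y q r} : lam x y q r → GPath lam S x y q r
  | step {x w w' y q q' r} : S w w' → lam x w q q' → GPath lam S w' y q' r →
      GPath lam S x y q r

lemma GPath.mono {lam : LamFamily Q X} {S S' : Option X → Option X → Prop}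
    (hS : ∀ a b, S a b → S' a b) {x y q r} (h : GPath lam S x y q r) :
    GPath lam S' x y q r := by
  induction h with
  | base h => exact .base h
  | step hs h _ ih => exact .step (hS _ _ hs) h ih

lemma GPath.trans_step {lam : LamFamily Q X} {S : Option X → Option X → Prop}
    {x w w' y q q' r} (hs : S w w') (h1 : GPath lam S x w q q')
    (h2 : GPath lam S w' y q' r) : GPath lam S x y q r := by
  revert hs h2
  induction h1 with
  | base h => intro hs h2; exact .step hs h h2
  | step hs' h _ ih => intro hs h2; exact .step hs' h (ih hs h2)

lemma GPath.prepend {lam : LamFamily Q X} {S S' : Option X → Option X → Prop}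
    {x w w' y q q' r} (hs : S w w') (h : lam x w q q')
    (hp : GPath (fun a b => GPath lam S a b) S' w' y q' r) :
    GPath (fun a b => GPath lam S a b) S' x y q r := by
  cases hp with
  | base hp => exact .base (.step hs h hp)
  | step hs' h' tail => exact .step hs' (.step hs h h') tail

lemma GPath.flatten {lam : LamFamily Q X} {S S' : Option X → Option X → Prop}
    {x y q r} :
    GPath (fun a b => GPath lam S a b) S' x y q r ↔
      GPath lam (fun a b => S a b ∨ S' a b) x y q r := by
  constructor
  · intro h
    induction h with
    | base h => exact h.mono (fun _ _ => Or.inl)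
    | step hs' h _ ih => exact GPath.trans_step (Or.inr hs') (h.mono (fun _ _ => Or.inl)) ih
  · intro h
    induction h with
    | base h => exact .base (.base h)
    | step hs h _ ih =>
      rcases hs with hs | hs
      · exact GPath.prepend hs h ih
      · exact .step hs (.base h) ih

lemma GPath.of_empty {lam : LamFamily Q X} {S : Option X → Option X → Prop}
    (hS : ∀ a b, ¬ S a b) {x y q r} :
    GPath lam S x y q r ↔ lam x y q r := by
  constructor
  · intro h
    cases h with
    | base h => exact h
    | step hs _ _ => exact absurd hs (hS _ _)
  · exact .base

lemma GPath.congr_S {lam : LamFamily Q X} {S S' : Option X → Option X → Prop}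
    (hS : ∀ a b, S a b ↔ S' a b) {x y q r} :
    GPath lam S x y q r ↔ GPath lam S' x y q r := by
  have : S = S' := by funext a b; exact propext (hS a b)
  rw [this]

lemma GPath_map (m : Option X → Option Y) (F : LamFamily Q Y)
    (S : Option X → Option X → Prop) {x y : Option X} {q r : Q} :
    GPath (fun a b => F (m a) (m b)) S x y q r ↔
      GPath F (fun w w' => ∃ a b, m a = w ∧ m b = w' ∧ S a b) (m x) (m y) q r := by
  constructor
  · intro h
    induction h with
    | base h => exact .base h
    | step hs h _ ih => exact .step ⟨_, _, rfl, rfl, hs⟩ h ih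
  · intro h
    have key : ∀ u v q r, GPath F (fun w w' => ∃ a b, m a = w ∧ m b = w' ∧ S a b) u v q r →
        ∀ x y, u = m x → v = m y → GPath (fun a b => F (m a) (m b)) S x y q r := by
      intro u v q r h
      induction h with
      | base h => intro x y hx hy; subst hx; subst hy; exact .base h
      | step hs h _ ih =>
        intro x y hx hy
        obtain ⟨a, b, ha, hb, hs⟩ := hs
        subst hx; subst hy
        exact .step hs (ha.symm ▸ h) (ih b y hb.symm rfl)
    exact key _ _ _ _ h x y rfl rfl

@[simp] lemma swap2_zero : swap2 0 = 1 := rfl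
@[simp] lemma swap2_one : swap2 1 = 0 := rfl

lemma altRowMul_zero (u : Fin 2 → Q → Q → Prop) (U : Mat2 Q) (j : Fin 2) (q r : Q) :
    altRowMul u (altPow U 0) j q r ↔ u j q r := by
  fin_cases j <;>
    simp [altRowMul, altPow, altOne, rcomp, runion, Fin.ext_iff]

lemma altRowMul_succ (u : Fin 2 → Q → Q → Prop) (U : Mat2 Q) (n : ℕ) (j : Fin 2) (q r : Q) :
    altRowMul u (altPow U (n + 1)) j q r ↔
      ∃ m q', altRowMul u (altPow U n) m q q' ∧ U (swap2 m) j q' r := by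
  constructor
  · intro h
    rcases h with ⟨q1, hu, hM⟩ | ⟨q1, hu, hM⟩
    · rcases hM with ⟨q2, hP, hU⟩ | ⟨q2, hP, hU⟩
      · exact ⟨0, q2, Or.inl ⟨q1, hu, hP⟩, hU⟩
      · exact ⟨1, q2, Or.inl ⟨q1, hu, hP⟩, hU⟩
    · rcases hM with ⟨q2, hP, hU⟩ | ⟨q2, hP, hU⟩
      · exact ⟨0, q2, Or.inr ⟨q1, hu, hP⟩, hU⟩
      · exact ⟨1, q2, Or.inr ⟨q1, hu, hP⟩, hU⟩
  · rintro ⟨m, q', hR, hU⟩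
    fin_cases m
    · rcases hR with ⟨q1, hu, hP⟩ | ⟨q1, hu, hP⟩
      · exact Or.inl ⟨q1, hu, Or.inl ⟨q', hP, hU⟩⟩
      · exact Or.inr ⟨q1, hu, Or.inl ⟨q', hP, hU⟩⟩
    · rcases hR with ⟨q1, hu, hP⟩ | ⟨q1, hu, hP⟩
      · exact Or.inl ⟨q1, hu, Or.inr ⟨q', hP, hU⟩⟩
      · exact Or.inr ⟨q1, hu, Or.inr ⟨q', hP, hU⟩⟩

end Aux

section ElimStep

variable {Q A B : Type*} (lam : LamFamily Q (A ⊕ A ⊕ B)) (z : A)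

/-- The interface vector used in `elimStep`. -/
private def pz (z : A) : Fin 2 → Option (A ⊕ A ⊕ B) :=
  ![some (Sum.inl z), some (Sum.inr (Sum.inl z))]

/-- The port relation of a single eliminated letter. -/
def portsOf (z : A) : Option (A ⊕ A ⊕ B) → Option (A ⊕ A ⊕ B) → Prop :=
  ports2 (Sum.inl z) (Sum.inr (Sum.inl z))

lemma portsOf_pz (z : A) (i : Fin 2) : portsOf (B := B) z (pz z i) (pz z (swap2 i)) := by
  fin_cases i
  · exact Or.inl ⟨rfl, rfl⟩
  · exact Or.inr ⟨rfl, rfl⟩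

lemma chain_path {x : Option (A ⊕ A ⊕ B)} :
    ∀ n (k : Fin 2) (q q' : Q),
      altRowMul (fun i => lam x (pz z i)) (altPow (fun i j => lam (pz z i) (pz z j)) n) k q q' →
      ∀ {y r}, GPath lam (portsOf z) (pz z (swap2 k)) y q' r → GPath lam (portsOf z) x y q r := by
  intro n
  induction n with
  | zero =>
    intro k q q' h y r tail
    replace h := (altRowMul_zero _ _ _ _ _).mp h
    exact .step (portsOf_pz z k) h tail
  | succ n ih =>
    intro k q q' h y r tail
    replace h := (altRowMul_succ _ _ _ _ _ _).mp h
    obtain ⟨m, q'', hR, hU⟩ := h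
    exact ih m q q'' hR (.step (portsOf_pz z k) hU tail)

lemma chain_prefix {x : Option (A ⊕ A ⊕ B)} {i : Fin 2} {q : Q} :
    ∀ n (k : Fin 2) (q' q'' : Q), lam x (pz z i) q q' →
      altRowMul (fun j => lam (pz z (swap2 i)) (pz z j))
        (altPow (fun a b => lam (pz z a) (pz z b)) n) k q' q'' →
      altRowMul (fun j => lam x (pz z j))
        (altPow (fun a b => lam (pz z a) (pz z b)) (n + 1)) k q q'' := by
  intro n
  induction n with
  | zero =>
    intro k q' q'' h0 h
    replace h := (altRowMul_zero _ _ _ _ _).mp h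
    refine (altRowMul_succ _ _ _ _ _ _).mpr ?_
    refine ⟨i, q', ?_, h⟩
    refine (altRowMul_zero _ _ _ _ _).mpr ?_
    exact h0
  | succ n ih =>
    intro k q' q'' h0 h
    replace h := (altRowMul_succ _ _ _ _ _ _).mp h
    obtain ⟨m, t, hR, hU⟩ := h
    refine (altRowMul_succ _ _ _ _ _ _).mpr ?_
    exact ⟨m, t, ih m q' t h0 hR, hU⟩

lemma elimStep_iff {x y : Option (A ⊕ A ⊕ B)} {q r : Q} :
    elimStep lam z x y q r ↔ GPath lam (portsOf z) x y q r := by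
  constructor
  · intro h
    rcases h with h | ⟨n, h⟩
    · exact .base h
    · rcases h with ⟨q', hR, hv⟩ | ⟨q', hR, hv⟩
      · exact chain_path lam z n 0 q q' hR (.base hv)
      · exact chain_path lam z n 1 q q' hR (.base hv)
  · intro h
    induction h with
    | base h => exact Or.inl h
    | step hs h _ ih =>
      rcases hs with ⟨hw, hw'⟩ | ⟨hw, hw'⟩
      · -- entered at `pz z 0`, continue at `pz z 1`
        subst hw; subst hw'
        rcases ih with ih | ⟨n, ih⟩
        · exact Or.inr ⟨0, Or.inl ⟨_, (altRowMul_zero _ _ 0 _ _).mpr h, ih⟩⟩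
        · rcases ih with ⟨q'', hR, hv⟩ | ⟨q'', hR, hv⟩
          · exact Or.inr ⟨n + 1, Or.inl ⟨q'',
              chain_prefix lam z (i := 0) n 0 _ q'' h hR, hv⟩⟩
          · exact Or.inr ⟨n + 1, Or.inr ⟨q'',
              chain_prefix lam z (i := 0) n 1 _ q'' h hR, hv⟩⟩
      · subst hw; subst hw'
        rcases ih with ih | ⟨n, ih⟩
        · exact Or.inr ⟨0, Or.inr ⟨_, (altRowMul_zero _ _ 1 _ _).mpr h, ih⟩⟩
        · rcases ih with ⟨q'', hR, hv⟩ | ⟨q'', hR, hv⟩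
          · exact Or.inr ⟨n + 1, Or.inl ⟨q'',
              chain_prefix lam z (i := 1) n 0 _ q'' h hR, hv⟩⟩
          · exact Or.inr ⟨n + 1, Or.inr ⟨q'',
              chain_prefix lam z (i := 1) n 1 _ q'' h hR, hv⟩⟩

lemma lamList_iff (δ : TRel Q (A ⊕ A ⊕ B)) (L : List A) {x y : Option (A ⊕ A ⊕ B)} {q r : Q} :
    lamList δ L x y q r ↔
      GPath (lamInit δ) (fun w w' => ∃ z ∈ L, portsOf z w w') x y q r := by
  induction L generalizing x y q r with
  | nil =>
    rw [GPath.of_empty (by rintro a b ⟨z, hz, -⟩; exact List.not_mem_nil hz)]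
    exact Iff.rfl
  | cons z L ih =>
    have hfam : lamList δ L = fun a b => GPath (lamInit δ)
        (fun w w' => ∃ z ∈ L, portsOf z w w') a b := by
      funext a b q r; exact propext ih
    show elimStep (lamList δ L) z x y q r ↔ _
    rw [elimStep_iff, hfam, GPath.flatten]
    exact GPath.congr_S (by
      intro a b
      constructor
      · rintro (⟨w, hw, hp⟩ | hp)
        · exact ⟨w, List.mem_cons_of_mem _ hw, hp⟩
        · exact ⟨z, List.mem_cons_self, hp⟩
      · rintro ⟨w, hw, hp⟩
        rcases List.mem_cons.1 hw with rfl | hw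
        · exact Or.inr hp
        · exact Or.inl ⟨w, hw, hp⟩)

lemma kappa_iff [Fintype A] (δ : TRel Q (A ⊕ A ⊕ B)) (a b : Q × Option B) :
    kappa δ a b ↔
      GPath (lamInit δ) (fun w w' => ∃ z : A, portsOf z w w')
        (a.2.map (fun x => Sum.inr (Sum.inr x))) (b.2.map (fun x => Sum.inr (Sum.inr x)))
        a.1 b.1 := by
  rw [show kappa δ a b = lamList δ Finset.univ.toList
      (a.2.map (fun x => Sum.inr (Sum.inr x))) (b.2.map (fun x => Sum.inr (Sum.inr x)))
      a.1 b.1 from rfl, lamList_iff]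
  exact GPath.congr_S (by
    intro w w'
    constructor
    · rintro ⟨z, -, hp⟩; exact ⟨z, hp⟩
    · rintro ⟨z, hp⟩; exact ⟨z, by simp, hp⟩)

end ElimStep


section Main

variable {Q A B C : Type*}

/-- The combined port relation of the two eliminated blocks. -/
def bigS (A B C : Type*) :
    Option (A ⊕ A ⊕ B ⊕ B ⊕ C) → Option (A ⊕ A ⊕ B ⊕ B ⊕ C) → Prop :=
  fun w w' =>
    (∃ z : A, ports2 (Sum.inl z) (Sum.inr (Sum.inl z)) w w') ∨
    (∃ z : B, ports2 (Sum.inr (Sum.inr (Sum.inl z)))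
        (Sum.inr (Sum.inr (Sum.inr (Sum.inl z)))) w w')

lemma GPath.congr_all {X : Type*} {lam : LamFamily Q X} {S S' : Option X → Option X → Prop}
    {x x' y y' : Option X} {q r : Q} (hS : ∀ a b, S a b ↔ S' a b)
    (hx : x = x') (hy : y = y') :
    GPath lam S x y q r ↔ GPath lam S' x' y' q r := by
  subst hx; subst hy; exact GPath.congr_S hS

lemma kappa_kappa_char [Fintype A] [Fintype B] (δ : TRel Q (A ⊕ A ⊕ B ⊕ B ⊕ C))
    (a b : Q × Option C) :
    kappa (kappa δ) a b ↔
      GPath (lamInit δ) (bigS A B C)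
        (a.2.map (fun c => Sum.inr (Sum.inr (Sum.inr (Sum.inr c)))))
        (b.2.map (fun c => Sum.inr (Sum.inr (Sum.inr (Sum.inr c))))) a.1 b.1 := by
  rw [kappa_iff (kappa δ) a b]
  have hfam : lamInit (kappa δ) = fun x y =>
      GPath (lamInit δ) (fun w w' => ∃ z : A, portsOf z w w')
        (Option.map (fun v => Sum.inr (Sum.inr v)) x)
        (Option.map (fun v => Sum.inr (Sum.inr v)) y) := by
    funext x y q r
    exact propext (kappa_iff δ (q, x) (r, y))
  rw [hfam]
  refine Iff.trans (GPath_map (fun o => Option.map (fun v =>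
      (Sum.inr (Sum.inr v) : A ⊕ A ⊕ B ⊕ B ⊕ C)) o)
      (GPath (lamInit δ) (fun w w' => ∃ z : A, portsOf z w w')) _) ?_
  refine Iff.trans GPath.flatten ?_
  refine GPath.congr_all ?_ (by cases a.2 <;> rfl) (by cases b.2 <;> rfl)
  intro w w'
  constructor
  · rintro (⟨z, hp⟩ | ⟨u, v, rfl, rfl, z, (⟨rfl, rfl⟩ | ⟨rfl, rfl⟩)⟩)
    · exact Or.inl ⟨z, hp⟩
    · exact Or.inr ⟨z, Or.inl ⟨rfl, rfl⟩⟩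
    · exact Or.inr ⟨z, Or.inr ⟨rfl, rfl⟩⟩
  · rintro (⟨z, hp⟩ | ⟨z, (⟨rfl, rfl⟩ | ⟨rfl, rfl⟩)⟩)
    · exact Or.inl ⟨z, hp⟩
    · exact Or.inr ⟨some (Sum.inl z), some (Sum.inr (Sum.inl z)), rfl, rfl, z,
        Or.inl ⟨rfl, rfl⟩⟩
    · exact Or.inr ⟨some (Sum.inr (Sum.inl z)), some (Sum.inl z), rfl, rfl, z,
        Or.inr ⟨rfl, rfl⟩⟩

end Main

/-- Trace swapping (axiom I9) for Turing automata: for a Turing automaton `T` of sort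
`(A ⊕ A) ⊕ (B ⊕ B) ⊕ C`, `κ_B(κ_A T) = κ_A(κ_B(T · ρ))`, where `ρ` interchanges the
`A ⊕ A` block with the `B ⊕ B` block; both sides have state set `Q` and their transition
relations coincide. -/
theorem trace_swapping {Q A B C : Type*} [Nonempty Q] [Fintype A] [Fintype B]
    (δ : TRel Q (A ⊕ A ⊕ B ⊕ B ⊕ C)) :
    kappa (kappa δ) = kappa (kappa (relabel (blockSwap A B C) δ)) := by
  funext a b
  apply propext
  rw [kappa_kappa_char δ a b, kappa_kappa_char (relabel (blockSwap A B C) δ) a b]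
  have hfam : lamInit (relabel (blockSwap A B C) δ) = fun x y =>
      lamInit δ (Option.map (blockSwap A B C).symm x) (Option.map (blockSwap A B C).symm y) := by
    funext x y q r; rfl
  rw [hfam]
  refine Iff.symm (Iff.trans (GPath_map (fun o => Option.map (blockSwap A B C).symm o)
      (lamInit δ) _) ?_)
  refine GPath.congr_all ?_ (by cases a.2 <;> rfl) (by cases b.2 <;> rfl)
  intro w w'
  constructor
  · rintro ⟨u, v, rfl, rfl, (⟨z, (⟨rfl, rfl⟩ | ⟨rfl, rfl⟩)⟩ | ⟨z, (⟨rfl, rfl⟩ | ⟨rfl, rfl⟩)⟩)⟩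
    · exact Or.inr ⟨z, Or.inl ⟨rfl, rfl⟩⟩
    · exact Or.inr ⟨z, Or.inr ⟨rfl, rfl⟩⟩
    · exact Or.inl ⟨z, Or.inl ⟨rfl, rfl⟩⟩
    · exact Or.inl ⟨z, Or.inr ⟨rfl, rfl⟩⟩
  · rintro (⟨z, (⟨rfl, rfl⟩ | ⟨rfl, rfl⟩)⟩ | ⟨z, (⟨rfl, rfl⟩ | ⟨rfl, rfl⟩)⟩)
    · exact ⟨some (Sum.inr (Sum.inr (Sum.inl z))), some (Sum.inr (Sum.inr (Sum.inr (Sum.inl z)))),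
        rfl, rfl, Or.inr ⟨z, Or.inl ⟨rfl, rfl⟩⟩⟩
    · exact ⟨some (Sum.inr (Sum.inr (Sum.inr (Sum.inl z)))), some (Sum.inr (Sum.inr (Sum.inl z))),
        rfl, rfl, Or.inr ⟨z, Or.inr ⟨rfl, rfl⟩⟩⟩
    · exact ⟨some (Sum.inl z), some (Sum.inr (Sum.inl z)),
        rfl, rfl, Or.inl ⟨z, Or.inl ⟨rfl, rfl⟩⟩⟩
    · exact ⟨some (Sum.inr (Sum.inl z)), some (Sum.inl z),
        rfl, rfl, Or.inl ⟨z, Or.inr ⟨rfl, rfl⟩⟩⟩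
end

section
/- Let A be a finite set, B and C sets, T = (Q, δ) a Turing automaton of sort A ⊕ A ⊕ B, and T' = (Q', δ') a Turing automaton of sort C. Then κ_A(T ⊕ T') = (κ_A T) ⊕ T' as Turing automata of sort B ⊕ C: both have state set Q × Q' and their transition relations coincide. (Superposing, axiom I8, for Turing automata.) -/
/-- The canonical associativity bijection `(A ⊕ A ⊕ B) ⊕ C ≃ A ⊕ A ⊕ (B ⊕ C)`. -/
def assocPerm (A B C : Type*) : (A ⊕ A ⊕ B) ⊕ C ≃ A ⊕ A ⊕ (B ⊕ C) where
  toFun x := match x with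
    | .inl (.inl a) => .inl a
    | .inl (.inr (.inl a)) => .inr (.inl a)
    | .inl (.inr (.inr b)) => .inr (.inr (.inl b))
    | .inr c => .inr (.inr (.inr c))
  invFun y := match y with
    | .inl a => .inl (.inl a)
    | .inr (.inl a) => .inl (.inr (.inl a))
    | .inr (.inr (.inl b)) => .inl (.inr (.inr b))
    | .inr (.inr (.inr c)) => .inr c
  left_inv x := by rcases x with (a | (a | b)) | c <;> rfl
  right_inv y := by rcases y with a | (a | (b | c)) <;> rfl

namespace SuperAux

variable {Q Q' A B C : Type*}

def lift (r : Q → Q → Prop) : (Q × Q') → (Q × Q') → Prop :=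
  fun s t => s.2 = t.2 ∧ r s.1 t.1

lemma rcomp_lift (r s : Q → Q → Prop) :
    rcomp (lift (Q' := Q') r) (lift s) = lift (rcomp r s) := by
  funext a b; apply propext
  constructor
  · rintro ⟨m, ⟨h1, h2⟩, h3, h4⟩
    exact ⟨h1.trans h3, m.1, h2, h4⟩
  · rintro ⟨h1, m, h2, h4⟩
    exact ⟨(m, a.2), ⟨rfl, h2⟩, h1, h4⟩

lemma runion_lift (r s : Q → Q → Prop) :
    runion (lift (Q' := Q') r) (lift s) = lift (runion r s) := by
  funext a b; apply propext
  unfold runion lift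
  tauto

lemma altOne_lift : (altOne : Mat2 (Q × Q')) = fun i j => lift (altOne (Q := Q) i j) := by
  funext i j a b
  apply propext
  unfold altOne lift
  by_cases h : i = j <;> simp [h, Prod.ext_iff, and_comm]

def liftMat (M : Mat2 Q) : Mat2 (Q × Q') := fun i j => lift (M i j)

def liftRow (u : Fin 2 → Q → Q → Prop) : Fin 2 → (Q × Q') → (Q × Q') → Prop :=
  fun i => lift (u i)

lemma altMul_lift (M N : Mat2 Q) :
    altMul (liftMat (Q' := Q') M) (liftMat N) = liftMat (altMul M N) := by
  funext i j
  simp only [altMul, liftMat, rcomp_lift, runion_lift]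

lemma altPow_lift (U : Mat2 Q) (n : ℕ) :
    altPow (liftMat (Q' := Q') U) n = liftMat (altPow U n) := by
  induction n with
  | zero => exact altOne_lift
  | succ n ih => show altMul _ _ = _; rw [ih, altMul_lift]; rfl

lemma altRowMul_lift (u : Fin 2 → Q → Q → Prop) (M : Mat2 Q) :
    altRowMul (liftRow (Q' := Q') u) (liftMat M) = liftRow (altRowMul u M) := by
  funext j
  simp only [altRowMul, liftRow, liftMat, rcomp_lift, runion_lift]

lemma altRowCol_lift (u v : Fin 2 → Q → Q → Prop) :
    altRowCol (liftRow (Q' := Q') u) (liftRow v) = lift (altRowCol u v) := by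
  simp only [altRowCol, liftRow, rcomp_lift, runion_lift]

lemma union_term_lift (u : Fin 2 → Q → Q → Prop) (U : Mat2 Q) (v : Fin 2 → Q → Q → Prop)
    (s t : Q × Q') :
    (∃ n, altRowCol (altRowMul (liftRow u) (altPow (liftMat U) n)) (liftRow v) s t)
      ↔ s.2 = t.2 ∧ ∃ n, altRowCol (altRowMul u (altPow U n)) v s.1 t.1 := by
  constructor
  · rintro ⟨n, h⟩
    rw [altPow_lift, altRowMul_lift, altRowCol_lift] at h
    exact ⟨h.1, n, h.2⟩
  · rintro ⟨h1, n, h⟩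
    refine ⟨n, ?_⟩
    rw [altPow_lift, altRowMul_lift, altRowCol_lift]
    exact ⟨h1, h⟩

lemma altRowCol_false_right {w v : Fin 2 → Q → Q → Prop}
    (hv : ∀ i a b, ¬ v i a b) (a b : Q) : ¬ altRowCol w v a b := by
  rintro (⟨m, _, h⟩ | ⟨m, _, h⟩) <;> exact hv _ _ _ h

lemma altRowCol_false_left {u : Fin 2 → Q → Q → Prop} {M : Mat2 Q} {v : Fin 2 → Q → Q → Prop}
    (hu : ∀ i a b, ¬ u i a b) (a b : Q) : ¬ altRowCol (altRowMul u M) v a b := by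
  rintro (⟨m, (⟨m', h, _⟩ | ⟨m', h, _⟩), _⟩ | ⟨m, (⟨m', h, _⟩ | ⟨m', h, _⟩), _⟩) <;>
    exact hu _ _ _ h

end SuperAux

namespace SuperAux

variable {Q Q' A B C : Type*}

/-- Decode an interface of sort `A ⊕ A ⊕ (B ⊕ C)` as either an interface of sort
`A ⊕ A ⊕ B` (including the anchor) or an element of `C`. -/
def decode : Option (A ⊕ A ⊕ (B ⊕ C)) → Option (A ⊕ A ⊕ B) ⊕ C := fun x =>
  match x with
  | none => .inl none
  | some (.inl a) => .inl (some (.inl a))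
  | some (.inr (.inl a)) => .inl (some (.inr (.inl a)))
  | some (.inr (.inr (.inl b))) => .inl (some (.inr (.inr b)))
  | some (.inr (.inr (.inr c))) => .inr c

lemma map_symm (x : Option (A ⊕ A ⊕ (B ⊕ C))) :
    x.map (assocPerm A B C).symm =
      (match decode x with
        | .inl x' => x'.map Sum.inl
        | .inr c => some (Sum.inr c)) := by
  rcases x with _ | (a | (a | (b | c))) <;> rfl

section autSumLemmas

variable {X : Type*} (δ : TRel Q X) (δ' : TRel Q' C) (s t : Q × Q')

lemma autSum_ll (u v : Option X) :
    autSum δ δ' (s, u.map Sum.inl) (t, v.map Sum.inl) ↔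
      (s.2 = t.2 ∧ δ (s.1, u) (t.1, v)) ∨
      (u = none ∧ v = none ∧ s.1 = t.1 ∧ δ' (s.2, none) (t.2, none)) := by
  constructor
  · rintro (⟨u', v', hu, hv, h, hd⟩ | ⟨u', v', hu, hv, h, hd⟩)
    · obtain rfl : u = u' := Option.map_injective Sum.inl_injective hu
      obtain rfl : v = v' := Option.map_injective Sum.inl_injective hv
      exact Or.inl ⟨h, hd⟩
    · rcases u with _ | u <;> rcases u' with _ | u' <;>
        rcases v with _ | v <;> rcases v' with _ | v' <;> simp_all
  · rintro (⟨h, hd⟩ | ⟨rfl, rfl, h, hd⟩)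
    · exact Or.inl ⟨u, v, rfl, rfl, h, hd⟩
    · exact Or.inr ⟨none, none, rfl, rfl, h, hd⟩

lemma autSum_lr (u : Option X) (c : C) :
    autSum δ δ' (s, u.map Sum.inl) (t, some (Sum.inr c)) ↔
      u = none ∧ s.1 = t.1 ∧ δ' (s.2, none) (t.2, some c) := by
  constructor
  · rintro (⟨u', v', hu, hv, h, hd⟩ | ⟨u', v', hu, hv, h, hd⟩)
    · rcases v' with _ | v' <;> simp_all
    · rcases u with _ | u <;> rcases u' with _ | u' <;> rcases v' with _ | v' <;> simp_all
  · rintro ⟨rfl, h, hd⟩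
    exact Or.inr ⟨none, some c, rfl, rfl, h, hd⟩

lemma autSum_rl (c : C) (v : Option X) :
    autSum δ δ' (s, some (Sum.inr c)) (t, v.map Sum.inl) ↔
      v = none ∧ s.1 = t.1 ∧ δ' (s.2, some c) (t.2, none) := by
  constructor
  · rintro (⟨u', v', hu, hv, h, hd⟩ | ⟨u', v', hu, hv, h, hd⟩)
    · rcases u' with _ | u' <;> simp_all
    · rcases v with _ | v <;> rcases v' with _ | v' <;> rcases u' with _ | u' <;> simp_all
  · rintro ⟨rfl, h, hd⟩
    exact Or.inr ⟨some c, none, rfl, rfl, h, hd⟩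

lemma autSum_rr (c c' : C) :
    autSum δ δ' (s, some (Sum.inr c)) (t, some (Sum.inr c')) ↔
      s.1 = t.1 ∧ δ' (s.2, some c) (t.2, some c') := by
  constructor
  · rintro (⟨u', v', hu, hv, h, hd⟩ | ⟨u', v', hu, hv, h, hd⟩)
    · rcases u' with _ | u' <;> simp_all
    · rcases u' with _ | u' <;> rcases v' with _ | v' <;> simp_all
  · rintro ⟨h, hd⟩
    exact Or.inr ⟨some c, some c', rfl, rfl, h, hd⟩

end autSumLemmas

/-- The conjectured value of the Kleene elimination for the sum automaton. -/
def Phi (δ' : TRel Q' C) (lam : LamFamily Q (A ⊕ A ⊕ B)) :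
    LamFamily (Q × Q') (A ⊕ A ⊕ (B ⊕ C)) := fun x y s t =>
  match decode x, decode y with
  | .inl x', .inl y' =>
      (s.2 = t.2 ∧ lam x' y' s.1 t.1) ∨
      (x' = none ∧ y' = none ∧ s.1 = t.1 ∧ δ' (s.2, none) (t.2, none))
  | .inl x', .inr c => x' = none ∧ s.1 = t.1 ∧ δ' (s.2, none) (t.2, some c)
  | .inr c, .inl y' => y' = none ∧ s.1 = t.1 ∧ δ' (s.2, some c) (t.2, none)
  | .inr c, .inr c' => s.1 = t.1 ∧ δ' (s.2, some c) (t.2, some c')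

lemma lamInit_eq (δ : TRel Q (A ⊕ A ⊕ B)) (δ' : TRel Q' C) :
    lamInit (relabel (assocPerm A B C) (autSum δ δ')) = Phi δ' (lamInit δ) := by
  funext x y s t
  apply propext
  show autSum δ δ' (s, x.map (assocPerm A B C).symm) (t, y.map (assocPerm A B C).symm) ↔ _
  rw [map_symm, map_symm]
  unfold Phi
  rcases hx : decode x with x' | c <;> rcases hy : decode y with y' | c'
  · exact autSum_ll δ δ' s t x' y'
  · exact autSum_lr δ δ' s t x' c'
  · exact autSum_rl δ δ' s t c y'
  · exact autSum_rr δ δ' s t c c'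

end SuperAux

namespace SuperAux

variable {Q Q' A B C : Type*}

lemma Phi_eq (δ' : TRel Q' C) (lam : LamFamily Q (A ⊕ A ⊕ B)) (x y) :
    Phi δ' lam x y = fun s t =>
      match decode x, decode y with
      | .inl x', .inl y' =>
          (s.2 = t.2 ∧ lam x' y' s.1 t.1) ∨
          (x' = none ∧ y' = none ∧ s.1 = t.1 ∧ δ' (s.2, none) (t.2, none))
      | .inl x', .inr c => x' = none ∧ s.1 = t.1 ∧ δ' (s.2, none) (t.2, some c)
      | .inr c, .inl y' => y' = none ∧ s.1 = t.1 ∧ δ' (s.2, some c) (t.2, none)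
      | .inr c, .inr c' => s.1 = t.1 ∧ δ' (s.2, some c) (t.2, some c') := rfl

lemma Phi_lift (δ' : TRel Q' C) (lam : LamFamily Q (A ⊕ A ⊕ B)) {x y x' y'}
    (hx : decode (C := C) x = .inl x') (hy : decode y = .inl y')
    (h : x' ≠ none ∨ y' ≠ none) :
    Phi δ' lam x y = lift (lam x' y') := by
  funext s t
  apply propext
  rw [Phi_eq, hx, hy]
  unfold lift
  rcases h with h | h <;> simp [h]

lemma Phi_false_lr (δ' : TRel Q' C) (lam : LamFamily Q (A ⊕ A ⊕ B)) {x y x0 c}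
    (hx : decode (C := C) x = .inl (some x0)) (hy : decode y = .inr c) :
    ∀ s t, ¬ Phi δ' lam x y s t := by
  intro s t h
  rw [Phi_eq, hx, hy] at h
  simp at h

lemma Phi_false_rl (δ' : TRel Q' C) (lam : LamFamily Q (A ⊕ A ⊕ B)) {x y c y0}
    (hx : decode (C := C) x = .inr c) (hy : decode y = .inl (some y0)) :
    ∀ s t, ¬ Phi δ' lam x y s t := by
  intro s t h
  rw [Phi_eq, hx, hy] at h
  simp at h

lemma elimStep_eq (δ' : TRel Q' C) (lam : LamFamily Q (A ⊕ A ⊕ B)) (z : A) :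
    elimStep (Phi δ' lam) z = Phi δ' (elimStep lam z) := by
  funext x y s t
  apply propext
  set P : Fin 2 → Option (A ⊕ A ⊕ (B ⊕ C)) :=
    ![some (Sum.inl z), some (Sum.inr (Sum.inl z))] with hP
  set Pd : Fin 2 → Option (A ⊕ A ⊕ B) :=
    ![some (Sum.inl z), some (Sum.inr (Sum.inl z))] with hPd
  have hP0 : decode (C := C) (P 0) = .inl (Pd 0) := rfl
  have hP1 : decode (C := C) (P 1) = .inl (Pd 1) := rfl
  have hPi : ∀ i, decode (C := C) (P i) = .inl (Pd i) := by
    intro i; fin_cases i; exacts [hP0, hP1]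
  have hPne : ∀ i, Pd i ≠ none := by
    intro i; fin_cases i <;> simp [hPd]
  show runion (Phi δ' lam x y)
      (fun q r => ∃ n, altRowCol
        (altRowMul (fun i => Phi δ' lam x (P i))
          (altPow (fun i j => Phi δ' lam (P i) (P j)) n))
        (fun i => Phi δ' lam (P i) y) q r) s t ↔ _
  have hU : (fun i j => Phi δ' lam (P i) (P j)) =
      liftMat (fun i j => lam (Pd i) (Pd j)) := by
    funext i j
    exact Phi_lift δ' lam (hPi i) (hPi j) (Or.inl (hPne i))
  rcases hx : decode (C := C) x with x' | c <;> rcases hy : decode y with y' | c'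
  · -- both on the δ side
    have hu : (fun i => Phi δ' lam x (P i)) = liftRow (fun i => lam x' (Pd i)) := by
      funext i; exact Phi_lift δ' lam hx (hPi i) (Or.inr (hPne i))
    have hv : (fun i => Phi δ' lam (P i) y) = liftRow (fun i => lam (Pd i) y') := by
      funext i; exact Phi_lift δ' lam (hPi i) hy (Or.inl (hPne i))
    rw [hu, hU, hv, Phi_eq δ' lam, Phi_eq δ' (elimStep lam z), hx, hy]
    dsimp only
    have hrhs : elimStep lam z x' y' s.1 t.1 ↔
        runion (lam x' y')
          (fun q r => ∃ n, altRowCol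
            (altRowMul (fun i => lam x' (Pd i)) (altPow (fun i j => lam (Pd i) (Pd j)) n))
            (fun i => lam (Pd i) y') q r) s.1 t.1 := Iff.rfl
    unfold runion
    rw [hrhs]
    unfold runion
    dsimp only
    rw [union_term_lift (Q' := Q') (fun i => lam x' (Pd i)) (fun i j => lam (Pd i) (Pd j))
      (fun i => lam (Pd i) y') s t]
    tauto
  · -- x on δ side, y on δ' side : union term vanishes
    have hv : ∀ i (a b : Q × Q'), ¬ Phi δ' lam (P i) y a b := by
      intro i
      obtain ⟨w, hw⟩ := Option.ne_none_iff_exists'.mp (hPne i)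
      exact Phi_false_lr (x0 := w) δ' lam (by rw [hPi i, hw]) hy
    have hfalse : ¬ (∃ n, altRowCol
        (altRowMul (fun i => Phi δ' lam x (P i))
          (altPow (fun i j => Phi δ' lam (P i) (P j)) n))
        (fun i => Phi δ' lam (P i) y) s t) := by
      rintro ⟨n, h⟩; exact altRowCol_false_right hv s t h
    rw [Phi_eq δ' lam x y, hx, hy, Phi_eq δ' (elimStep lam z) x y, hx, hy]
    dsimp only
    unfold runion
    tauto
  · -- x on δ' side
    have hu : ∀ i (a b : Q × Q'), ¬ Phi δ' lam x (P i) a b := by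
      intro i
      obtain ⟨w, hw⟩ := Option.ne_none_iff_exists'.mp (hPne i)
      exact Phi_false_rl (y0 := w) δ' lam hx (by rw [hPi i, hw])
    have hfalse : ¬ (∃ n, altRowCol
        (altRowMul (fun i => Phi δ' lam x (P i))
          (altPow (fun i j => Phi δ' lam (P i) (P j)) n))
        (fun i => Phi δ' lam (P i) y) s t) := by
      rintro ⟨n, h⟩; exact altRowCol_false_left hu s t h
    rw [Phi_eq δ' lam x y, hx, hy, Phi_eq δ' (elimStep lam z) x y, hx, hy]
    dsimp only
    unfold runion
    tauto
  · have hu : ∀ i (a b : Q × Q'), ¬ Phi δ' lam x (P i) a b := by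
      intro i
      obtain ⟨w, hw⟩ := Option.ne_none_iff_exists'.mp (hPne i)
      exact Phi_false_rl (y0 := w) δ' lam hx (by rw [hPi i, hw])
    have hfalse : ¬ (∃ n, altRowCol
        (altRowMul (fun i => Phi δ' lam x (P i))
          (altPow (fun i j => Phi δ' lam (P i) (P j)) n))
        (fun i => Phi δ' lam (P i) y) s t) := by
      rintro ⟨n, h⟩; exact altRowCol_false_left hu s t h
    rw [Phi_eq δ' lam x y, hx, hy, Phi_eq δ' (elimStep lam z) x y, hx, hy]
    dsimp only
    unfold runion
    tauto

lemma lamList_eq (δ : TRel Q (A ⊕ A ⊕ B)) (δ' : TRel Q' C) (L : List A) :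
    lamList (relabel (assocPerm A B C) (autSum δ δ')) L = Phi δ' (lamList δ L) := by
  induction L with
  | nil => exact lamInit_eq δ δ'
  | cons z L ih =>
      show elimStep _ z = _
      rw [ih, elimStep_eq]
      rfl

end SuperAux

/-- Superposing (axiom I8) for Turing automata: for a Turing automaton `T` of sort
`A ⊕ A ⊕ B` (`A` finite) and a Turing automaton `T'` of sort `C`,
`κ_A(T ⊕ T') = (κ_A T) ⊕ T'`; both sides have state set `Q × Q'` and their transition
relations coincide. -/
theorem superposing {Q Q' A B C : Type*} [Nonempty Q] [Nonempty Q'] [Fintype A]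
    (δ : TRel Q (A ⊕ A ⊕ B)) (δ' : TRel Q' C) :
    kappa (relabel (assocPerm A B C) (autSum δ δ')) = autSum (kappa δ) δ' := by
  funext a b
  apply propext
  obtain ⟨s, xa⟩ := a
  obtain ⟨t, xb⟩ := b
  show lamList (relabel (assocPerm A B C) (autSum δ δ')) Finset.univ.toList
      (xa.map (fun x => Sum.inr (Sum.inr x))) (xb.map (fun x => Sum.inr (Sum.inr x))) s t ↔ _
  rw [SuperAux.lamList_eq]
  rcases xa with _ | (b0 | c0) <;> rcases xb with _ | (b1 | c1)
  · refine Iff.trans ?_ (SuperAux.autSum_ll (kappa δ) δ' s t none none).symm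
    simp only [SuperAux.Phi_eq, SuperAux.decode, kappa, Option.map_none]
    try tauto
  · refine Iff.trans ?_ (SuperAux.autSum_ll (kappa δ) δ' s t none (some b1)).symm
    simp only [SuperAux.Phi_eq, SuperAux.decode, kappa, Option.map_none, Option.map_some]
    try tauto
  · refine Iff.trans ?_ (SuperAux.autSum_lr (kappa δ) δ' s t none c1).symm
    simp only [SuperAux.Phi_eq, SuperAux.decode, kappa, Option.map_none, Option.map_some]
    try tauto
  · refine Iff.trans ?_ (SuperAux.autSum_ll (kappa δ) δ' s t (some b0) none).symm
    simp only [SuperAux.Phi_eq, SuperAux.decode, kappa, Option.map_none, Option.map_some]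
    try tauto
  · refine Iff.trans ?_ (SuperAux.autSum_ll (kappa δ) δ' s t (some b0) (some b1)).symm
    simp only [SuperAux.Phi_eq, SuperAux.decode, kappa, Option.map_none, Option.map_some]
    try tauto
  · refine Iff.trans ?_ (SuperAux.autSum_lr (kappa δ) δ' s t (some b0) c1).symm
    simp only [SuperAux.Phi_eq, SuperAux.decode, kappa, Option.map_none, Option.map_some]
    try tauto
  · refine Iff.trans ?_ (SuperAux.autSum_rl (kappa δ) δ' s t c0 none).symm
    simp only [SuperAux.Phi_eq, SuperAux.decode, kappa, Option.map_none, Option.map_some]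
    try tauto
  · refine Iff.trans ?_ (SuperAux.autSum_rl (kappa δ) δ' s t c0 (some b1)).symm
    simp only [SuperAux.Phi_eq, SuperAux.decode, kappa, Option.map_none, Option.map_some]
    try tauto
  · refine Iff.trans ?_ (SuperAux.autSum_rr (kappa δ) δ' s t c0 c1).symm
    simp only [SuperAux.Phi_eq, SuperAux.decode, kappa, Option.map_none, Option.map_some]
    try tauto
end

section
/- Let A be a finite set, B and C sets, T = (Q, δ) a Turing automaton of sort A ⊕ A ⊕ B, and ρ : B → C a bijection. Then κ_A(T · (id_{A⊕A} ⊕ ρ)) = (κ_A T) · ρ as Turing automata of sort C: both have state set Q and their transition relations coincide. (Naturality of trace under relabeling, axiom I2, for Turing automata.) -/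
lemma elimStep_comp {Q A B C : Type*} (lam : LamFamily Q (A ⊕ A ⊕ B))
    (f : Option (A ⊕ A ⊕ C) → Option (A ⊕ A ⊕ B)) (z : A)
    (h1 : f (some (Sum.inl z)) = some (Sum.inl z))
    (h2 : f (some (Sum.inr (Sum.inl z))) = some (Sum.inr (Sum.inl z)))
    (x y : Option (A ⊕ A ⊕ C)) :
    elimStep (fun a b => lam (f a) (f b)) z x y = elimStep lam z (f x) (f y) := by
  have h : ∀ i : Fin 2,
      f ((![some (Sum.inl z), some (Sum.inr (Sum.inl z))] :
          Fin 2 → Option (A ⊕ A ⊕ C)) i) =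
      (![some (Sum.inl z), some (Sum.inr (Sum.inl z))] :
          Fin 2 → Option (A ⊕ A ⊕ B)) i := by
    intro i
    fin_cases i
    · simpa using h1
    · simpa using h2
  simp only [elimStep, h]

lemma lamList_relabel {Q A B C : Type*} (δ : TRel Q (A ⊕ A ⊕ B)) (ρ : B ≃ C)
    (L : List A) :
    lamList (relabel ((Equiv.refl A).sumCongr ((Equiv.refl A).sumCongr ρ)) δ) L =
      fun x y => lamList δ L
        (x.map (((Equiv.refl A).sumCongr ((Equiv.refl A).sumCongr ρ)).symm))
        (y.map (((Equiv.refl A).sumCongr ((Equiv.refl A).sumCongr ρ)).symm)) := by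
  induction L with
  | nil => rfl
  | cons z L ih =>
    funext x y
    show elimStep _ z x y = elimStep _ z _ _
    rw [ih]
    exact elimStep_comp (lamList δ L) _ z rfl rfl x y

/-- Naturality of the trace under relabeling (axiom I2) for Turing automata: for a Turing
automaton `T` of sort `A ⊕ A ⊕ B` (`A` finite) and a bijection `ρ : B ≃ C`,
`κ_A(T · (1_{A⊕A} ⊕ ρ)) = (κ_A T) · ρ`; both sides have state set `Q` and their transition
relations coincide. -/
theorem trace_naturality {Q A B C : Type*} [Nonempty Q] [Fintype A]
    (δ : TRel Q (A ⊕ A ⊕ B)) (ρ : B ≃ C) :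
    kappa (relabel ((Equiv.refl A).sumCongr ((Equiv.refl A).sumCongr ρ)) δ) =
      relabel ρ (kappa δ) := by
  funext a b
  show kappa _ a b = kappa δ _ _
  unfold kappa
  rw [lamList_relabel]
  have key : ∀ (o : Option C),
      Option.map (((Equiv.refl A).sumCongr ((Equiv.refl A).sumCongr ρ)).symm)
        (o.map (fun x => Sum.inr (Sum.inr x) : C → A ⊕ A ⊕ C)) =
      (o.map ρ.symm).map (fun x => Sum.inr (Sum.inr x) : B → A ⊕ A ⊕ B) := by
    intro o; cases o <;> rfl
  simp only [key]
end
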